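/- For any Borel probability measure F on R^d there exists a constant c(F) > 0 depending only on F such that for every positive integer n one can construct, on one probability space, random vectors ξ_n and η_n with laws L(ξ_n) = F^{*(n+1)} and L(η_n) = F^{*n} such that P(‖ξ_n − η_n‖ > c(F)) ≤ c(F)/√n. -/

import Mathlib

open MeasureTheory ProbabilityTheory Metric

/-- n-fold convolution power of a measure on ℝ^d (0-th power is the Dirac measure at 0). -/
noncomputable def convPow {d : ℕ} (F : Measure (EuclideanSpace ℝ (Fin d))) :
    ℕ → Measure (EuclideanSpace ℝ (Fin d))
  | 0 => Measure.dirac 0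
  | (n + 1) => (convPow F n).conv F

open scoped ENNReal
set_option linter.unusedSectionVars false
set_option maxHeartbeats 1000000

/- ## Nat/Real combinatorial lemmas -/

lemma aux_centralBinom_sq_le (m : ℕ) : (Nat.centralBinom m)^2 * (2*m+1) ≤ 16^m := by
  induction m with
  | zero => simp [Nat.centralBinom]
  | succ m ih =>
    have key := Nat.succ_mul_centralBinom_succ m
    have h1 : (2*m+1)*(2*m+3) ≤ (2*(m+1))^2 := by nlinarith
    have hpos : 0 < (m+1)^2 := by positivity
    have hmain : (m+1)^2 * ((Nat.centralBinom (m+1))^2 * (2*(m+1)+1)) ≤ (m+1)^2 * 16^(m+1) := by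
      have e : (m+1)^2 * ((Nat.centralBinom (m+1))^2 * (2*(m+1)+1))
          = ((m+1) * Nat.centralBinom (m+1))^2 * (2*m+3) := by ring
      rw [e, key]
      have e2 : (2 * (2 * m + 1) * Nat.centralBinom m) ^ 2 * (2 * m + 3)
          = ((Nat.centralBinom m)^2 * (2*m+1)) * (4 * ((2*m+1)*(2*m+3))) := by ring
      rw [e2]
      calc (Nat.centralBinom m)^2 * (2*m+1) * (4 * ((2*m+1)*(2*m+3)))
          ≤ 16^m * (4 * ((2*m+1)*(2*m+3))) := Nat.mul_le_mul_right _ ih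
        _ ≤ 16^m * (4 * (2*(m+1))^2) := Nat.mul_le_mul_left _ (Nat.mul_le_mul_left _ h1)
        _ = (m+1)^2 * 16^(m+1) := by ring
    exact Nat.le_of_mul_le_mul_left hmain hpos

lemma aux_pow16 (m : ℕ) : (16:ℕ)^m = 4^(2*m) := by
  rw [pow_mul]; norm_num

lemma aux_middle_choose_sq (n : ℕ) : (n.choose (n/2))^2 * n ≤ 4^n := by
  rcases Nat.even_or_odd n with ⟨m, hm⟩ | ⟨m, hm⟩
  · subst hm
    have h2 : (m+m)/2 = m := by omega
    have hc : (m+m).choose ((m+m)/2) = Nat.centralBinom m := by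
      rw [h2, Nat.centralBinom, two_mul]
    rw [hc]
    calc (Nat.centralBinom m)^2 * (m+m) ≤ (Nat.centralBinom m)^2 * (2*m+1) :=
          Nat.mul_le_mul_left _ (by omega)
      _ ≤ 16^m := aux_centralBinom_sq_le m
      _ = 4^(m+m) := by rw [aux_pow16, two_mul]
  · subst hm
    have h2 : (2*m+1)/2 = m := by omega
    rw [h2]
    have hle : (2*m+1).choose m ≤ 2 * Nat.centralBinom m := by
      rcases Nat.eq_zero_or_pos m with rfl | hm0
      · simp [Nat.centralBinom]
      · obtain ⟨k, rfl⟩ : ∃ k, m = k + 1 := ⟨m - 1, by omega⟩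
        have hp : (2*(k+1)+1).choose (k+1) = (2*(k+1)).choose k + (2*(k+1)).choose (k+1) := by
          have e : 2*(k+1)+1 = (2*(k+1)) + 1 := rfl
          rw [e, Nat.choose_succ_succ']
        rw [hp, Nat.centralBinom]
        have hmid : (2*(k+1))/2 = k+1 := by omega
        have a1 : (2*(k+1)).choose k ≤ (2*(k+1)).choose (k+1) := by
          have := Nat.choose_le_middle k (2*(k+1)); rwa [hmid] at this
        omega
    calc ((2*m+1).choose m)^2 * (2*m+1) ≤ (2 * Nat.centralBinom m)^2 * (2*m+1) := by
          apply Nat.mul_le_mul_right; exact Nat.pow_le_pow_left hle 2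
      _ = 4 * ((Nat.centralBinom m)^2 * (2*m+1)) := by ring
      _ ≤ 4 * 16^m := Nat.mul_le_mul_left _ (aux_centralBinom_sq_le m)
      _ = 4^(2*m+1) := by rw [aux_pow16]; ring

lemma aux_choose_antitone_right {n k : ℕ} (h : n/2 ≤ k) : n.choose (k+1) ≤ n.choose k := by
  rcases le_or_gt n k with hnk | hkn
  · rw [Nat.choose_eq_zero_of_lt (by omega)]; exact Nat.zero_le _
  · have key := Nat.choose_succ_right_eq n k
    have h1 : n - k ≤ k + 1 := by omega
    have h2 : n.choose (k+1) * (k+1) ≤ n.choose k * (k+1) := by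
      calc n.choose (k+1) * (k+1) = n.choose k * (n-k) := key
        _ ≤ n.choose k * (k+1) := Nat.mul_le_mul_left _ h1
    exact Nat.le_of_mul_le_mul_right h2 (by omega)

lemma aux_telescope_sum (n : ℕ) :
    ∑ k ∈ Finset.range (n+1), (n.choose k - n.choose (k+1)) = n.choose (n/2) := by
  have hsplit : Finset.range (n+1) = Finset.range (n/2) ∪ Finset.Ico (n/2) (n+1) := by
    rw [Finset.range_eq_Ico, Finset.range_eq_Ico, Finset.Ico_union_Ico_eq_Ico (Nat.zero_le _) (by omega)]
  rw [hsplit, Finset.sum_union (by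
    simp [Finset.disjoint_left, Finset.mem_Ico, Finset.mem_range]; omega)]
  have h1 : ∑ k ∈ Finset.range (n/2), (n.choose k - n.choose (k+1)) = 0 := by
    apply Finset.sum_eq_zero
    intro k hk
    rw [Finset.mem_range] at hk
    exact Nat.sub_eq_zero_of_le (Nat.choose_le_succ_of_lt_half_left hk)
  rw [h1, zero_add]
  have key : ∀ m, n/2 ≤ m → m ≤ n + 1 →
      ∑ k ∈ Finset.Ico (n/2) m, (n.choose k - n.choose (k+1)) = n.choose (n/2) - n.choose m := by
    intro m
    induction m with
    | zero =>
      intro h _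
      have h0 : n/2 = 0 := by omega
      simp [h0]
    | succ m ih =>
      intro hm hm'
      rcases Nat.lt_or_ge m (n/2) with hlt | hge
      · have he : m + 1 = n/2 := by omega
        rw [he]; simp
      · rw [Finset.sum_Ico_succ_top hge, ih hge (by omega)]
        have hmono : n.choose (m+1) ≤ n.choose m := aux_choose_antitone_right hge
        have hmono2 : n.choose m ≤ n.choose (n/2) := Nat.choose_le_middle m n
        omega
  rw [key (n+1) (by omega) le_rfl, Nat.choose_eq_zero_of_lt (Nat.lt_succ_self n), Nat.sub_zero]

lemma aux_min_sum (n : ℕ) :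
    (∑ k ∈ Finset.range (n+1), min (2 * n.choose k) ((n+1).choose (k+1))) + n.choose (n/2)
      = 2^(n+1) := by
  have e1 : ∀ k, min (2 * n.choose k) ((n+1).choose (k+1))
      = n.choose k + min (n.choose k) (n.choose (k+1)) := by
    intro k
    rw [Nat.choose_succ_succ, two_mul]
    simp only [Nat.succ_eq_add_one]
    omega
  simp only [e1]
  rw [Finset.sum_add_distrib, ← aux_telescope_sum n, add_assoc, ← Finset.sum_add_distrib]
  have e3 : ∀ k ∈ Finset.range (n+1),
      min (n.choose k) (n.choose (k+1)) + (n.choose k - n.choose (k+1)) = n.choose k := by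
    intro k _; omega
  rw [Finset.sum_congr rfl e3, Nat.sum_range_choose, pow_succ]
  ring

lemma aux_choose_div_le (n : ℕ) (hn : 0 < n) :
    (n.choose (n/2) : ℝ) / 2^(n+1) ≤ 1 / (2 * Real.sqrt n) := by
  have hsq : ((n.choose (n/2) : ℝ))^2 * n ≤ 4^n := by
    have := aux_middle_choose_sq n
    have h := (Nat.cast_le (α := ℝ)).2 this
    push_cast at h
    linarith
  have hsqrtpos : 0 < Real.sqrt n := Real.sqrt_pos.2 (by exact_mod_cast hn)
  have hCpos : (0:ℝ) ≤ (n.choose (n/2) : ℝ) := by positivity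
  have hkey : (n.choose (n/2) : ℝ) * Real.sqrt n ≤ 2^n := by
    have h1 : ((n.choose (n/2) : ℝ) * Real.sqrt n)^2 ≤ (2^n)^2 := by
      have e : ((n.choose (n/2) : ℝ) * Real.sqrt n)^2 = ((n.choose (n/2) : ℝ))^2 * n := by
        rw [mul_pow, Real.sq_sqrt (by positivity)]
      rw [e]
      calc ((n.choose (n/2) : ℝ))^2 * n ≤ 4^n := hsq
        _ = (2^n)^2 := by rw [show (4:ℝ)=2^2 by norm_num, ← pow_mul, ← pow_mul, mul_comm]
    have h2 : (0:ℝ) ≤ (n.choose (n/2) : ℝ) * Real.sqrt n := by positivity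
    nlinarith [pow_pos (show (0:ℝ) < 2 by norm_num) n]
  rw [div_le_div_iff₀ (by positivity) (by positivity)]
  calc (n.choose (n/2) : ℝ) * (2 * Real.sqrt n) = 2 * ((n.choose (n/2) : ℝ) * Real.sqrt n) := by
        ring
    _ ≤ 2 * 2^n := by linarith
    _ ≤ 1 * 2^(n+1) := by rw [pow_succ]; ring_nf; linarith [pow_pos (show (0:ℝ) < 2 by norm_num) n]

/- ## Measure-theoretic helper lemmas -/

namespace Statement19Aux

variable {M : Type*} [AddCommMonoid M] [MeasurableSpace M] [MeasurableAdd₂ M]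

lemma conv_def (μ ν : Measure M) :
    μ.conv ν = Measure.map (fun p : M × M => p.1 + p.2) (μ.prod ν) := rfl

lemma prod_smul_left (c : ℝ≥0∞) (μ : Measure M) (ν : Measure M) [SFinite ν] :
    (c • μ).prod ν = c • (μ.prod ν) := by
  ext s hs
  rw [Measure.prod_apply hs, Measure.smul_apply, smul_eq_mul, Measure.prod_apply hs,
    lintegral_smul_measure, smul_eq_mul]

lemma prod_smul_right (c : ℝ≥0∞) (μ : Measure M) (ν : Measure M) [SFinite μ] [SFinite ν] :
    μ.prod (c • ν) = c • (μ.prod ν) := by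
  ext s hs
  rw [Measure.prod_apply hs, Measure.smul_apply, smul_eq_mul, Measure.prod_apply hs]
  simp only [Measure.smul_apply, smul_eq_mul]
  rw [lintegral_const_mul _ (measurable_measure_prodMk_left hs)]

lemma smul_conv' (c : ℝ≥0∞) (μ ν : Measure M) [SFinite ν] :
    (c • μ).conv ν = c • (μ.conv ν) := by
  rw [conv_def, conv_def, prod_smul_left, Measure.map_smul]

lemma conv_smul' (c : ℝ≥0∞) (μ ν : Measure M) [SFinite μ] [SFinite ν] :
    μ.conv (c • ν) = c • (μ.conv ν) := by
  rw [conv_def, conv_def, prod_smul_right, Measure.map_smul]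

lemma conv_univ (μ ν : Measure M) [SFinite μ] [SFinite ν] :
    (μ.conv ν) Set.univ = μ Set.univ * ν Set.univ := by
  rw [conv_def, Measure.map_apply (by fun_prop) MeasurableSet.univ, Set.preimage_univ,
    ← Set.univ_prod_univ, Measure.prod_prod]

lemma conv_assoc' (μ ν ρ : Measure M) [SFinite μ] [SFinite ν] [SFinite ρ] :
    (μ.conv ν).conv ρ = μ.conv (ν.conv ρ) := by
  rw [conv_def, conv_def, conv_def, conv_def]
  have h1 := Measure.map_prod_map (f := fun p : M × M => p.1 + p.2) (g := (id : M → M))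
      (μ.prod ν) ρ (by fun_prop) measurable_id
  rw [Measure.map_id] at h1
  have h2 := Measure.map_prod_map (f := (id : M → M)) (g := fun p : M × M => p.1 + p.2)
      μ (ν.prod ρ) measurable_id (by fun_prop)
  rw [Measure.map_id] at h2
  rw [h1, h2,
    ← Measure.prodAssoc_prod, Measure.map_map (by fun_prop) (by fun_prop),
    Measure.map_map (by fun_prop) (by fun_prop),
    Measure.map_map (by fun_prop) MeasurableEquiv.prodAssoc.measurable]
  congr 1
  ext p
  simp [MeasurableEquiv.prodAssoc, Function.comp, Prod.map, add_assoc]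

lemma isFiniteMeasure_smul (c : ℝ≥0∞) (hc : c ≠ ∞) (μ : Measure M) [IsFiniteMeasure μ] :
    IsFiniteMeasure (c • μ) := by
  constructor
  rw [Measure.smul_apply, smul_eq_mul]
  exact ENNReal.mul_lt_top hc.lt_top (measure_lt_top μ _)

lemma isFiniteMeasure_finset_sum {ι : Type*} (s : Finset ι) (m : ι → Measure M)
    (hm : ∀ i, IsFiniteMeasure (m i)) : IsFiniteMeasure (∑ i ∈ s, m i) := by
  constructor
  rw [Measure.finset_sum_apply]
  exact ENNReal.sum_lt_top.2 fun i _ => measure_lt_top (m i) _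

lemma map_finset_sum {ι α β : Type*} [MeasurableSpace α] [MeasurableSpace β]
    (s : Finset ι) (m : ι → Measure α) {f : α → β} (hf : Measurable f) :
    (∑ i ∈ s, m i).map f = ∑ i ∈ s, (m i).map f := by
  classical
  induction s using Finset.induction_on with
  | empty => simp
  | insert _ _ hnot ih =>
    rw [Finset.sum_insert hnot, Finset.sum_insert hnot, Measure.map_add _ _ hf, ih]

end Statement19Aux

open Statement19Aux

section ConvPowLemmas

variable {d : ℕ}

local notation "E" => EuclideanSpace ℝ (Fin d)

instance convPow_finite (μ : Measure E) [IsFiniteMeasure μ] :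
    ∀ n, IsFiniteMeasure (convPow μ n)
  | 0 => by rw [convPow]; infer_instance
  | (n+1) => by
      rw [convPow]
      haveI := convPow_finite μ n
      infer_instance

instance convPow_prob (μ : Measure E) [IsProbabilityMeasure μ] :
    ∀ n, IsProbabilityMeasure (convPow μ n)
  | 0 => by rw [convPow]; infer_instance
  | (n+1) => by
      rw [convPow]
      haveI := convPow_prob μ n
      infer_instance

lemma convPow_univ (μ : Measure E) [IsFiniteMeasure μ] (n : ℕ) :
    (convPow μ n) Set.univ = (μ Set.univ)^n := by
  induction n with
  | zero => simp [convPow]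
  | succ n ih =>
    rw [convPow]
    haveI := convPow_finite μ n
    rw [conv_univ, ih, pow_succ]

/-- distribute convolution over a finite combination -/
lemma finsum_smul_conv {ι : Type*} (s : Finset ι) (a : ι → ℝ≥0∞) (m : ι → Measure E)
    (ρ : Measure E) [SFinite ρ] (hm : ∀ i, IsFiniteMeasure (m i)) (ha : ∀ i, a i ≠ ∞) :
    (∑ k ∈ s, a k • m k).conv ρ = ∑ k ∈ s, a k • ((m k).conv ρ) := by
  classical
  induction s using Finset.induction_on with
  | empty => simp
  | insert j t hnot ih =>
    haveI h1 : IsFiniteMeasure (a j • m j) := isFiniteMeasure_smul _ (ha j) _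
    haveI h2 : IsFiniteMeasure (∑ k ∈ t, a k • m k) :=
      isFiniteMeasure_finset_sum _ _ (fun i => isFiniteMeasure_smul _ (ha i) _)
    rw [Finset.sum_insert hnot, Finset.sum_insert hnot, Measure.add_conv, ih,
      smul_conv']

/-- binomial expansion of convolution powers -/
lemma convPow_add_expand (μ' ν' : Measure E) [IsFiniteMeasure μ'] [IsFiniteMeasure ν'] :
    ∀ m : ℕ, convPow (μ' + ν') m
      = ∑ k ∈ Finset.range (m+1),
          (m.choose k : ℝ≥0∞) • ((convPow μ' k).conv (convPow ν' (m-k))) := by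
  intro m
  induction m with
  | zero => simp [convPow]
  | succ m ih =>
    have hfin : ∀ k l : ℕ, IsFiniteMeasure ((convPow μ' k).conv (convPow ν' l)) := by
      intro k l
      haveI := convPow_finite μ' k
      haveI := convPow_finite ν' l
      infer_instance
    have hconvμ : ∀ k l : ℕ,
        ((convPow μ' k).conv (convPow ν' l)).conv μ' = (convPow μ' (k+1)).conv (convPow ν' l) := by
      intro k l
      haveI := convPow_finite μ' k
      haveI := convPow_finite ν' l
      rw [conv_assoc', Measure.conv_comm (convPow ν' l) μ', ← conv_assoc']
      rfl
    have hconvν : ∀ k l : ℕ,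
        ((convPow μ' k).conv (convPow ν' l)).conv ν' = (convPow μ' k).conv (convPow ν' (l+1)) := by
      intro k l
      haveI := convPow_finite μ' k
      haveI := convPow_finite ν' l
      rw [conv_assoc']
      rfl
    haveI hS : IsFiniteMeasure (∑ k ∈ Finset.range (m+1),
        (m.choose k : ℝ≥0∞) • ((convPow μ' k).conv (convPow ν' (m-k)))) := by
      apply isFiniteMeasure_finset_sum
      intro i
      haveI := hfin i (m - i)
      exact isFiniteMeasure_smul _ (by simp) _
    have step : convPow (μ' + ν') (m+1)
        = (∑ k ∈ Finset.range (m+1),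
            (m.choose k : ℝ≥0∞) • ((convPow μ' k).conv (convPow ν' (m-k)))).conv (μ' + ν') := by
      rw [show convPow (μ' + ν') (m+1) = (convPow (μ' + ν') m).conv (μ' + ν') from rfl, ih]
    rw [step, Measure.conv_add,
      finsum_smul_conv _ _ _ _ (fun i => hfin i (m - i)) (fun i => by simp),
      finsum_smul_conv _ _ _ _ (fun i => hfin i (m - i)) (fun i => by simp)]
    have lhs1 : ∀ k ∈ Finset.range (m+1),
        (m.choose k : ℝ≥0∞) • (((convPow μ' k).conv (convPow ν' (m-k))).conv μ')
        = (m.choose k : ℝ≥0∞) • ((convPow μ' (k+1)).conv (convPow ν' (m-k))) := by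
      intro k _; rw [hconvμ]
    have lhs2 : ∀ k ∈ Finset.range (m+1),
        (m.choose k : ℝ≥0∞) • (((convPow μ' k).conv (convPow ν' (m-k))).conv ν')
        = (m.choose k : ℝ≥0∞) • ((convPow μ' k).conv (convPow ν' (m+1-k))) := by
      intro k hk
      rw [Finset.mem_range] at hk
      rw [hconvν, show m - k + 1 = m + 1 - k by omega]
    rw [Finset.sum_congr rfl lhs1, Finset.sum_congr rfl lhs2]
    -- now the Pascal shuffle on the RHS
    rw [Finset.sum_range_succ' _ (m+1)]
    simp only [Nat.succ_sub_succ_eq_sub, Nat.choose_succ_succ, Nat.cast_add, add_smul,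
      Nat.choose_zero_right, Nat.cast_one, one_smul, Nat.sub_zero]
    rw [Finset.sum_add_distrib, add_assoc]
    congr 1
    -- remaining: ∑_{k∈range(m+1)} C(m,k) • Λ k (m+1-k) = ∑_k C(m,k+1) • Λ (k+1) (m-k) + Λ 0 (m+1)
    rw [Finset.sum_range_succ' _ m, Finset.sum_range_succ]
    simp [Nat.choose_succ_self, Nat.succ_sub_succ_eq_sub]

lemma conv_convPow_mu (μ' ν' : Measure E) [IsFiniteMeasure μ'] [IsFiniteMeasure ν'] (k l : ℕ) :
    ((convPow μ' k).conv (convPow ν' l)).conv μ' = (convPow μ' (k+1)).conv (convPow ν' l) := by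
  haveI := convPow_finite μ' k
  haveI := convPow_finite ν' l
  rw [conv_assoc', Measure.conv_comm (convPow ν' l) μ', ← conv_assoc']
  rfl

end ConvPowLemmas

/-- For any F on ℝ^d there is c(F) > 0 such that for every n ≥ 1 one can construct, on one
probability space, random vectors ξ and η with laws F^{n+1} and F^n respectively, with
P(‖ξ - η‖ > c) ≤ c/√n. -/
theorem statement19 {d : ℕ} (F : Measure (EuclideanSpace ℝ (Fin d)))
    [IsProbabilityMeasure F] :
    ∃ c : ℝ, 0 < c ∧ ∀ n : ℕ, 0 < n →
      ∃ (Ω : Type) (_ : MeasurableSpace Ω) (P : Measure Ω) (_ : IsProbabilityMeasure P)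
        (ξ η : Ω → EuclideanSpace ℝ (Fin d)),
        Measurable ξ ∧ Measurable η ∧
        P.map ξ = convPow F (n + 1) ∧ P.map η = convPow F n ∧
        (P {ω | c < ‖ξ ω - η ω‖}).toReal ≤ c / Real.sqrt n := by
  classical
  -- Step 1: choose a radius R with mass at least 1/2
  obtain ⟨R, hR1, hRmeas⟩ : ∃ R : ℕ, 1 ≤ (R:ℝ) ∧
      (2⁻¹ : ℝ≥0∞) ≤ F (closedBall (0 : EuclideanSpace ℝ (Fin d)) (R:ℝ)) := by
    have hU : (⋃ R : ℕ, closedBall (0 : EuclideanSpace ℝ (Fin d)) (R:ℝ)) = Set.univ := by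
      ext x
      simp only [Set.mem_iUnion, mem_closedBall, Set.mem_univ, iff_true, dist_zero_right]
      obtain ⟨R, hR⟩ := exists_nat_ge ‖x‖
      exact ⟨R, hR⟩
    have hmono : Monotone (fun R : ℕ => closedBall (0 : EuclideanSpace ℝ (Fin d)) (R:ℝ)) := by
      intro a b hab
      exact closedBall_subset_closedBall (by exact_mod_cast hab)
    have hiSup : F (⋃ R : ℕ, closedBall (0 : EuclideanSpace ℝ (Fin d)) (R:ℝ))
        = ⨆ R : ℕ, F (closedBall (0 : EuclideanSpace ℝ (Fin d)) (R:ℝ)) :=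
      hmono.measure_iUnion
    rw [hU, measure_univ] at hiSup
    have h2 : (2⁻¹:ℝ≥0∞) < 1 := by norm_num
    rw [hiSup] at h2
    obtain ⟨R, hR⟩ := lt_iSup_iff.mp h2
    refine ⟨R + 1, by push_cast; linarith [Nat.cast_nonneg (α := ℝ) R], ?_⟩
    refine le_trans hR.le (measure_mono (closedBall_subset_closedBall ?_))
    push_cast; linarith
  refine ⟨max (R:ℝ) 1, lt_of_lt_of_le one_pos (le_max_right _ _), fun n hn => ?_⟩
  have hcR : (R:ℝ) ≤ max (R:ℝ) 1 := le_max_left _ _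
  have hc1 : (1:ℝ) ≤ max (R:ℝ) 1 := le_max_right _ _
  set B : Set (EuclideanSpace ℝ (Fin d)) := closedBall 0 (R:ℝ) with hBdef
  have hBmeas : MeasurableSet B := measurableSet_closedBall
  set pB : ℝ≥0∞ := F B with hpBdef
  have hpBhalf : (2⁻¹:ℝ≥0∞) ≤ pB := hRmeas
  have hpB0 : pB ≠ 0 := by
    intro h; rw [h] at hpBhalf; simp at hpBhalf
  have hpBtop : pB ≠ ∞ := (measure_lt_top F B).ne
  set μ' : Measure (EuclideanSpace ℝ (Fin d)) := ((2 * pB)⁻¹) • F.restrict B with hμ'def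
  have hinv_le_one : (2 * pB)⁻¹ ≤ 1 := by
    rw [ENNReal.inv_le_one]
    calc (1:ℝ≥0∞) = 2 * 2⁻¹ := (ENNReal.mul_inv_cancel (by norm_num) (by norm_num)).symm
      _ ≤ 2 * pB := mul_le_mul_right hpBhalf 2
  have hμ'le : μ' ≤ F := by
    rw [Measure.le_iff']
    intro s
    rw [hμ'def, Measure.smul_apply, smul_eq_mul]
    calc (2 * pB)⁻¹ * (F.restrict B) s ≤ 1 * F s :=
          mul_le_mul' hinv_le_one (Measure.le_iff'.1 Measure.restrict_le_self s)
      _ = F s := one_mul _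
  haveI hμ'fin : IsFiniteMeasure μ' := isFiniteMeasure_of_le F hμ'le
  have hμ'univ : μ' Set.univ = 2⁻¹ := by
    rw [hμ'def, Measure.smul_apply, smul_eq_mul, Measure.restrict_apply_univ]
    rw [ENNReal.mul_inv (Or.inl (by norm_num)) (Or.inl (by norm_num)), mul_assoc,
      ENNReal.inv_mul_cancel hpB0 hpBtop, mul_one]
  set ν' : Measure (EuclideanSpace ℝ (Fin d)) := F - μ' with hν'def
  haveI hν'fin : IsFiniteMeasure ν' := isFiniteMeasure_of_le F (hν'def ▸ Measure.sub_le)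
  have hsum : μ' + ν' = F := by
    rw [hν'def, add_comm]
    exact Measure.sub_add_cancel_of_le hμ'le
  have hν'univ : ν' Set.univ = 2⁻¹ := by
    rw [hν'def, Measure.sub_apply MeasurableSet.univ hμ'le, measure_univ, hμ'univ]
    have h12 : (1:ℝ≥0∞) = 2⁻¹ + 2⁻¹ := ENNReal.inv_two_add_inv_two.symm
    exact ENNReal.sub_eq_of_eq_add (by norm_num) h12
  -- binomial expansion
  have hbinom : ∀ m : ℕ, convPow F m = ∑ k ∈ Finset.range (m+1),
      (m.choose k : ℝ≥0∞) • ((convPow μ' k).conv (convPow ν' (m-k))) := by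
    intro m
    conv_lhs => rw [← hsum]
    exact convPow_add_expand μ' ν' m
  -- mass of the building blocks
  have hΛuniv : ∀ k l : ℕ, ((convPow μ' k).conv (convPow ν' l)) Set.univ = (2⁻¹:ℝ≥0∞)^(k+l) := by
    intro k l
    haveI := convPow_finite μ' k
    haveI := convPow_finite ν' l
    rw [conv_univ, convPow_univ, convPow_univ, hμ'univ, hν'univ, ← pow_add]
  -- the weights
  set ck : ℕ → ℕ := fun k => min (2 * n.choose k) ((n+1).choose (k+1)) with hckdef
  -- the diagonal-type coupling
  set T : Measure (EuclideanSpace ℝ (Fin d)) →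
      Measure (EuclideanSpace ℝ (Fin d) × EuclideanSpace ℝ (Fin d)) :=
    fun m => Measure.map (fun q : (EuclideanSpace ℝ (Fin d)) × (EuclideanSpace ℝ (Fin d)) =>
      (q.1 + q.2, q.1)) (m.prod μ') with hTdef
  have hTmble : Measurable (fun q : (EuclideanSpace ℝ (Fin d)) × (EuclideanSpace ℝ (Fin d)) =>
      (q.1 + q.2, q.1)) := by fun_prop
  have hmapfstT : ∀ m : Measure (EuclideanSpace ℝ (Fin d)), SFinite m →
      (T m).map Prod.fst = m.conv μ' := by
    intro m hm
    haveI := hm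
    rw [hTdef, Measure.map_map measurable_fst hTmble]
    rfl
  have hmapsndT : ∀ m : Measure (EuclideanSpace ℝ (Fin d)), SFinite m →
      (T m).map Prod.snd = (2⁻¹:ℝ≥0∞) • m := by
    intro m hm
    haveI := hm
    rw [hTdef, Measure.map_map measurable_snd hTmble]
    have he : Measure.map ((Prod.snd)
          ∘ (fun q : (EuclideanSpace ℝ (Fin d)) × (EuclideanSpace ℝ (Fin d)) =>
            (q.1 + q.2, q.1))) (m.prod μ')
        = Measure.map Prod.fst (m.prod μ') := rfl
    rw [he, Measure.map_fst_prod, hμ'univ]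
  -- the good part of the coupling
  set G : Measure (EuclideanSpace ℝ (Fin d) × EuclideanSpace ℝ (Fin d)) :=
    ∑ k ∈ Finset.range (n+1),
      (ck k : ℝ≥0∞) • T ((convPow μ' k).conv (convPow ν' (n-k))) with hGdef
  have hTfin : ∀ k l : ℕ, IsFiniteMeasure (T ((convPow μ' k).conv (convPow ν' l))) := by
    intro k l
    haveI := convPow_finite μ' k
    haveI := convPow_finite ν' l
    rw [hTdef]
    exact Measure.isFiniteMeasure_map _ _
  have hΛfin : ∀ k l : ℕ, IsFiniteMeasure ((convPow μ' k).conv (convPow ν' l)) := by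
    intro k l
    haveI := convPow_finite μ' k
    haveI := convPow_finite ν' l
    infer_instance
  -- marginals of G
  have hGfst : G.map Prod.fst = ∑ k ∈ Finset.range (n+1),
      (ck k : ℝ≥0∞) • ((convPow μ' (k+1)).conv (convPow ν' (n-k))) := by
    rw [hGdef, Statement19Aux.map_finset_sum _ _ measurable_fst]
    refine Finset.sum_congr rfl fun k _ => ?_
    haveI := hΛfin k (n-k)
    rw [Measure.map_smul, hmapfstT _ inferInstance, conv_convPow_mu]
  have hGsnd : G.map Prod.snd = ∑ k ∈ Finset.range (n+1),
      ((ck k : ℝ≥0∞) * 2⁻¹) • ((convPow μ' k).conv (convPow ν' (n-k))) := by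
    rw [hGdef, Statement19Aux.map_finset_sum _ _ measurable_snd]
    refine Finset.sum_congr rfl fun k _ => ?_
    haveI := hΛfin k (n-k)
    rw [Measure.map_smul, hmapsndT _ inferInstance, smul_smul]
  -- total masses
  set S : ℝ≥0∞ := ∑ k ∈ Finset.range (n+1), (ck k : ℝ≥0∞) with hSdef
  set ε : ℝ≥0∞ := (2⁻¹:ℝ≥0∞)^(n+1) with hεdef
  have hεtop : ε ≠ ∞ := by
    rw [hεdef]; exact ENNReal.pow_ne_top (by norm_num)
  have hGfstuniv : (G.map Prod.fst) Set.univ = S * ε := by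
    rw [hGfst, Measure.finset_sum_apply, hSdef, Finset.sum_mul]
    refine Finset.sum_congr rfl fun k hk => ?_
    rw [Finset.mem_range] at hk
    rw [Measure.smul_apply, smul_eq_mul, hΛuniv, hεdef]
    congr 2
    omega
  have hGsnduniv : (G.map Prod.snd) Set.univ = S * ε := by
    rw [hGsnd, Measure.finset_sum_apply, hSdef, Finset.sum_mul]
    refine Finset.sum_congr rfl fun k hk => ?_
    rw [Finset.mem_range] at hk
    rw [Measure.smul_apply, smul_eq_mul, hΛuniv, hεdef, mul_assoc]
    congr 1
    rw [← pow_succ']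
    congr 1
    omega
  -- sub-marginal properties
  have hfstle : G.map Prod.fst ≤ convPow F (n+1) := by
    rw [Measure.le_iff']
    intro s
    rw [hGfst, hbinom (n+1), Measure.finset_sum_apply, Measure.finset_sum_apply,
      Finset.sum_range_succ' _ (n+1)]
    refine le_trans (Finset.sum_le_sum fun k hk => ?_) le_self_add
    rw [Finset.mem_range] at hk
    rw [Measure.smul_apply, Measure.smul_apply, smul_eq_mul, smul_eq_mul,
      Nat.succ_sub_succ_eq_sub]
    refine mul_le_mul_left ?_ _
    exact_mod_cast Nat.cast_le.2 (min_le_right _ _)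
  have hsndle : G.map Prod.snd ≤ convPow F n := by
    rw [Measure.le_iff']
    intro s
    rw [hGsnd, hbinom n, Measure.finset_sum_apply, Measure.finset_sum_apply]
    refine Finset.sum_le_sum fun k hk => ?_
    rw [Measure.smul_apply, Measure.smul_apply, smul_eq_mul, smul_eq_mul]
    refine mul_le_mul_left ?_ _
    have h1 : (ck k : ℝ≥0∞) ≤ ((2 * n.choose k : ℕ) : ℝ≥0∞) :=
      Nat.cast_le.2 (min_le_left _ _)
    calc (ck k : ℝ≥0∞) * 2⁻¹ ≤ ((2 * n.choose k : ℕ) : ℝ≥0∞) * 2⁻¹ :=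
          mul_le_mul_left h1 _
      _ = (n.choose k : ℝ≥0∞) := by
          push_cast
          rw [mul_comm (2:ℝ≥0∞) _, mul_assoc, ENNReal.mul_inv_cancel (by norm_num) (by norm_num),
            mul_one]
  -- remainders
  haveI hfinfst : IsFiniteMeasure (G.map Prod.fst) :=
    isFiniteMeasure_of_le _ hfstle
  haveI hfinsnd : IsFiniteMeasure (G.map Prod.snd) :=
    isFiniteMeasure_of_le _ hsndle
  set ρξ : Measure (EuclideanSpace ℝ (Fin d)) := convPow F (n+1) - G.map Prod.fst with hρξdef
  set ρη : Measure (EuclideanSpace ℝ (Fin d)) := convPow F n - G.map Prod.snd with hρηdef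
  haveI : IsFiniteMeasure ρξ := isFiniteMeasure_of_le _ (hρξdef ▸ Measure.sub_le)
  haveI : IsFiniteMeasure ρη := isFiniteMeasure_of_le _ (hρηdef ▸ Measure.sub_le)
  set CB : ℝ≥0∞ := (n.choose (n/2) : ℝ≥0∞) with hCBdef
  set r : ℝ≥0∞ := CB * ε with hrdef
  have hrtop : r ≠ ∞ := ENNReal.mul_ne_top (ENNReal.natCast_ne_top _) hεtop
  have hsum_ck : S + CB = (2:ℝ≥0∞)^(n+1) := by
    rw [hSdef, hCBdef, ← Nat.cast_sum]
    have := aux_min_sum n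
    exact_mod_cast congrArg (Nat.cast : ℕ → ℝ≥0∞) this
  have h2ε : (2:ℝ≥0∞)^(n+1) * ε = 1 := by
    rw [hεdef, ← ENNReal.inv_pow, ENNReal.mul_inv_cancel (pow_ne_zero _ (by norm_num))
      (ENNReal.pow_ne_top (by norm_num))]
  have hSε_one : S * ε + CB * ε = 1 := by
    rw [← add_mul, hsum_ck, h2ε]
  have hSεtop : S * ε ≠ ∞ := by
    refine ne_top_of_le_ne_top (by norm_num : (1:ℝ≥0∞) ≠ ∞) ?_
    rw [← hSε_one]; exact le_self_add
  have hρξuniv : ρξ Set.univ = r := by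
    rw [hρξdef, Measure.sub_apply MeasurableSet.univ hfstle, measure_univ, hGfstuniv, hrdef,
      ← hSε_one, ENNReal.add_sub_cancel_left hSεtop]
  have hρηuniv : ρη Set.univ = r := by
    rw [hρηdef, Measure.sub_apply MeasurableSet.univ hsndle, measure_univ, hGsnduniv, hrdef,
      ← hSε_one, ENNReal.add_sub_cancel_left hSεtop]
  -- the coupling measure
  set γ : Measure (EuclideanSpace ℝ (Fin d) × EuclideanSpace ℝ (Fin d)) :=
    G + r⁻¹ • (ρξ.prod ρη) with hγdef
  have hdecfst : ρξ + G.map Prod.fst = convPow F (n+1) :=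
    Measure.sub_add_cancel_of_le hfstle
  have hdecsnd : ρη + G.map Prod.snd = convPow F n :=
    Measure.sub_add_cancel_of_le hsndle
  have hfstγ : γ.map Prod.fst = convPow F (n+1) := by
    rw [hγdef, Measure.map_add _ _ measurable_fst, Measure.map_smul, Measure.map_fst_prod,
      hρηuniv]
    rcases eq_or_ne r 0 with hr | hr
    · have hρξ0 : ρξ = 0 := by
        rw [← Measure.measure_univ_eq_zero, hρξuniv, hr]
      rw [← hdecfst, hρξ0, hr]
      simp
    · rw [smul_smul, ENNReal.inv_mul_cancel hr hrtop, one_smul, ← hdecfst, add_comm]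
  have hsndγ : γ.map Prod.snd = convPow F n := by
    rw [hγdef, Measure.map_add _ _ measurable_snd, Measure.map_smul, Measure.map_snd_prod,
      hρξuniv]
    rcases eq_or_ne r 0 with hr | hr
    · have hρη0 : ρη = 0 := by
        rw [← Measure.measure_univ_eq_zero, hρηuniv, hr]
      rw [← hdecsnd, hρη0, hr]
      simp
    · rw [smul_smul, ENNReal.inv_mul_cancel hr hrtop, one_smul, ← hdecsnd, add_comm]
  haveI hγprob : IsProbabilityMeasure γ := by
    constructor
    have h1 : γ Set.univ = (γ.map Prod.fst) Set.univ := by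
      rw [Measure.map_apply measurable_fst MeasurableSet.univ, Set.preimage_univ]
    rw [h1, hfstγ, measure_univ]
  -- the bad set
  set A : Set (EuclideanSpace ℝ (Fin d) × EuclideanSpace ℝ (Fin d)) :=
    {q | max (R:ℝ) 1 < ‖q.1 - q.2‖} with hAdef
  have hnorm_mble : Measurable fun q :
      (EuclideanSpace ℝ (Fin d)) × (EuclideanSpace ℝ (Fin d)) => ‖q.1 - q.2‖ :=
    (measurable_fst.sub measurable_snd).norm
  have hAmeas : MeasurableSet A := measurableSet_lt measurable_const hnorm_mble
  have hSball : MeasurableSet {y : EuclideanSpace ℝ (Fin d) | max (R:ℝ) 1 < ‖y‖} :=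
    measurableSet_lt measurable_const measurable_norm
  have hμ'bad : μ' {y : EuclideanSpace ℝ (Fin d) | max (R:ℝ) 1 < ‖y‖} = 0 := by
    rw [hμ'def, Measure.smul_apply, smul_eq_mul, Measure.restrict_apply hSball]
    have hempty : {y : EuclideanSpace ℝ (Fin d) | max (R:ℝ) 1 < ‖y‖} ∩ B = ∅ := by
      ext y
      simp only [Set.mem_inter_iff, Set.mem_setOf_eq, hBdef, mem_closedBall, dist_zero_right,
        Set.mem_empty_iff_false, iff_false, not_and, not_le]
      intro hy
      linarith [hcR]
    rw [hempty, measure_empty, mul_zero]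
  have hTbad : ∀ m : Measure (EuclideanSpace ℝ (Fin d)), SFinite m → (T m) A = 0 := by
    intro m hm
    haveI := hm
    rw [hTdef, Measure.map_apply hTmble hAmeas]
    have hpre : (fun q : (EuclideanSpace ℝ (Fin d)) × (EuclideanSpace ℝ (Fin d)) =>
        (q.1 + q.2, q.1)) ⁻¹' A
        = Set.univ ×ˢ {y : EuclideanSpace ℝ (Fin d) | max (R:ℝ) 1 < ‖y‖} := by
      ext q
      simp only [Set.mem_preimage, hAdef, Set.mem_setOf_eq, Set.mem_prod, Set.mem_univ,
        true_and, add_sub_cancel_left]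
    rw [hpre, Measure.prod_prod, hμ'bad, mul_zero]
  have hGbad : G A = 0 := by
    rw [hGdef, Measure.finset_sum_apply]
    refine Finset.sum_eq_zero fun k _ => ?_
    haveI := hΛfin k (n-k)
    rw [Measure.smul_apply, smul_eq_mul, hTbad _ inferInstance, mul_zero]
  have hγbad : γ A ≤ r := by
    rw [hγdef, Measure.add_apply, hGbad, zero_add, Measure.smul_apply, smul_eq_mul]
    have hprodle : (ρξ.prod ρη) A ≤ r * r := by
      calc (ρξ.prod ρη) A ≤ (ρξ.prod ρη) Set.univ := measure_mono (Set.subset_univ _)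
        _ = ρξ Set.univ * ρη Set.univ := by
            rw [← Set.univ_prod_univ, Measure.prod_prod]
        _ = r * r := by rw [hρξuniv, hρηuniv]
    rcases eq_or_ne r 0 with hr | hr
    · have : (ρξ.prod ρη) A = 0 := le_antisymm (by rw [hr] at hprodle; simpa using hprodle)
        zero_le
      rw [this, mul_zero, hr]
    · calc r⁻¹ * (ρξ.prod ρη) A ≤ r⁻¹ * (r * r) := mul_le_mul_right hprodle _
        _ = (r⁻¹ * r) * r := (mul_assoc _ _ _).symm
        _ = r := by rw [ENNReal.inv_mul_cancel hr hrtop, one_mul]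
  -- assemble
  refine ⟨(EuclideanSpace ℝ (Fin d)) × (EuclideanSpace ℝ (Fin d)), inferInstance, γ,
    hγprob, Prod.fst, Prod.snd, measurable_fst, measurable_snd, hfstγ, hsndγ, ?_⟩
  have hrtoReal : r.toReal = (n.choose (n/2) : ℝ) / 2^(n+1) := by
    rw [hrdef, ENNReal.toReal_mul, hCBdef, hεdef, ENNReal.toReal_pow, ENNReal.toReal_inv]
    simp only [ENNReal.toReal_natCast, ENNReal.toReal_ofNat]
    rw [inv_pow, div_eq_mul_inv]
  have hfinal : (γ A).toReal ≤ max (R:ℝ) 1 / Real.sqrt n := by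
    calc (γ A).toReal ≤ r.toReal := ENNReal.toReal_mono hrtop hγbad
      _ = (n.choose (n/2) : ℝ) / 2^(n+1) := hrtoReal
      _ ≤ 1 / (2 * Real.sqrt n) := aux_choose_div_le n hn
      _ ≤ max (R:ℝ) 1 / Real.sqrt n := by
          have hs : 0 < Real.sqrt n := Real.sqrt_pos.2 (by exact_mod_cast hn)
          rw [div_le_div_iff₀ (by positivity) hs]
          nlinarith [hs, hc1]
  exact hfinal
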